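/- Let q ∈ [0,1) and let (α_k) be a sequence in (0,1) with α_k² = (1−α_k)α_{k−1}² + q α_k for k ≥ 1, with α₀ = (√5 − 1)/2 and q = 0. Define λ₀ = 1 and λ_k = ∏_{i=0}^{k−1}(1−α_i). Then for all k ≥ 0: 2/(k+2)² ≤ λ_k ≤ 4/(k+2)². -/

import Mathlib

open Finset

theorem lambda_growth_bounds
    (α : ℕ → ℝ)
    (hα0 : α 0 = (Real.sqrt 5 - 1) / 2)
    (hmem : ∀ k : ℕ, α k ∈ Set.Ioo (0 : ℝ) 1)
    (hrec : ∀ k : ℕ, α (k + 1) ^ 2 = (1 - α (k + 1)) * α k ^ 2) :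
    ∀ k : ℕ, 2 / ((k : ℝ) + 2) ^ 2 ≤ ∏ i ∈ Finset.range k, (1 - α i) ∧
      ∏ i ∈ Finset.range k, (1 - α i) ≤ 4 / ((k : ℝ) + 2) ^ 2 := by
  have hs5 : Real.sqrt 5 ^ 2 = 5 := Real.sq_sqrt (by norm_num)
  have hs5nn : (0:ℝ) ≤ Real.sqrt 5 := Real.sqrt_nonneg 5
  -- upper bound: (k+3) * α k ≤ 2
  have hub : ∀ k : ℕ, ((k:ℝ) + 3) * α k ≤ 2 := by
    intro k
    induction k with
    | zero =>
      rw [hα0]; push_cast; nlinarith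
    | succ n ih =>
      by_contra h
      push_neg at h
      obtain ⟨ha0, ha1⟩ := hmem (n+1)
      obtain ⟨hb0, hb1⟩ := hmem n
      have hr := hrec n
      push_cast at h ⊢
      set N := (n:ℝ)
      have hN : 0 ≤ N := Nat.cast_nonneg n
      have hb2 : ((N+3) * α n)^2 ≤ 4 := by
        have := mul_le_mul ih ih (mul_nonneg (by linarith) hb0.le) (by norm_num)
        nlinarith
      have ha2 : 4 < ((N+4) * α (n+1))^2 := by nlinarith
      have key : (N+3)^2 * α (n+1)^2 ≤ 4 * (1 - α (n+1)) := by nlinarith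
      nlinarith [mul_le_mul_of_nonneg_left key (show (0:ℝ) ≤ (N+4)^2 by positivity),
        mul_lt_mul_of_pos_left ha2 (show (0:ℝ) < (N+3)^2 by positivity)]
  have hpos : ∀ i, (0:ℝ) < 1 - α i := fun i => by have := (hmem i).2; linarith
  have hprodpos : ∀ k, 0 < ∏ i ∈ Finset.range k, (1 - α i) := fun k =>
    Finset.prod_pos (fun i _ => hpos i)
  -- identity: ∏_{i<k+1} (1-α i) = α k ^ 2
  have hid : ∀ k : ℕ, ∏ i ∈ Finset.range (k+1), (1 - α i) = α k ^ 2 := by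
    intro k
    induction k with
    | zero =>
      simp [hα0]; nlinarith
    | succ n ih =>
      rw [Finset.prod_range_succ, ih, hrec n]; ring
  -- lower bound: ∏ ≥ 2/((k+1)(k+2))
  have hlb : ∀ k : ℕ, 2 / (((k:ℝ)+1)*((k:ℝ)+2)) ≤ ∏ i ∈ Finset.range k, (1 - α i) := by
    intro k
    induction k with
    | zero => norm_num
    | succ n ih =>
      rw [Finset.prod_range_succ]
      push_cast
      have h1 : ((n:ℝ)+1)/((n:ℝ)+3) ≤ 1 - α n := by
        have := hub n
        have hn3 : (0:ℝ) < (n:ℝ)+3 := by positivity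
        rw [div_le_iff₀ hn3]; nlinarith
      have h2 : (0:ℝ) < ((n:ℝ)+1)/((n:ℝ)+3) := by positivity
      calc 2 / (((n:ℝ)+1+1)*((n:ℝ)+1+2))
          = 2 / (((n:ℝ)+1)*((n:ℝ)+2)) * (((n:ℝ)+1)/((n:ℝ)+3)) := by
            field_simp; ring
        _ ≤ (∏ i ∈ Finset.range n, (1 - α i)) * (1 - α n) := by
            apply mul_le_mul ih h1 (le_of_lt h2) (le_of_lt (hprodpos n))
  intro k
  constructor
  · refine le_trans ?_ (hlb k)
    apply div_le_div_of_nonneg_left (by norm_num) (by positivity)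
    nlinarith [Nat.cast_nonneg (α := ℝ) k]
  · cases k with
    | zero => norm_num
    | succ n =>
      rw [hid n]
      have := hub n
      have ha0 := (hmem n).1
      have hn2 : (0:ℝ) < ((n:ℝ)+1+2)^2 := by positivity
      push_cast
      rw [le_div_iff₀ hn2]
      nlinarith [mul_le_mul this this (mul_nonneg (by positivity) ha0.le) (by norm_num : (0:ℝ) ≤ 2)]
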